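/- A T_{≤n}-operad A is reduced (A_p is a singleton for every linear tree p) if and only if the projection p_A : A × RGr_{≤n} → RGr_{≤n} is an isomorphism; consequently the category of reduced T_{≤n}-operads is a bipullback of the functor Δ_{RGr} : Op(T_{≤n}) → Op(T_{≤n})/RGr_{≤n} (pullback along RGr_{≤n} ↪ T_{≤n}) against the point 1_{RGr_{≤n}}. -/

import Mathlib

open CategoryTheory Limits

universe v u

/-- `k`-stage trees (globular pasting schemes): a `(k+1)`-stage tree is a list of
`k`-stage trees. -/
def Tr : ℕ → Type
  | 0 => PUnit
  | n + 1 => List (Tr n)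

/-- Truncation of a `(k+1)`-stage tree to a `k`-stage tree (the common source and
target in the globular set of trees). -/
def trunc : ∀ {n : ℕ}, Tr (n + 1) → Tr n
  | 0, _ => PUnit.unit
  | _ + 1, l => l.map trunc

/-- A tree is linear when it has exactly one leaf, i.e. is of the form `z^s U_{k-s}`. -/
def linear : ∀ {n : ℕ}, Tr n → Prop
  | 0, _ => True
  | _ + 1, [] => True
  | _ + 1, [p] => linear p
  | _ + 1, _ :: _ :: _ => False

/-- The linear tree `z^{n-h} U_h` of stage `n` and height `h` (for `h ≤ n`). -/
def lin : ∀ (n _h : ℕ), Tr n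
  | 0, _ => PUnit.unit
  | n + 1, 0 => ([] : List (Tr n))
  | n + 1, h + 1 => [lin n h]

theorem linear_trunc : ∀ {n : ℕ} (p : Tr (n + 1)), linear p → linear (trunc p)
  | 0, _, _ => trivial
  | _ + 1, [], _ => trivial
  | _ + 1, [p], h => linear_trunc p h
  | _ + 1, _ :: _ :: _, h => h.elim

/-- `n`-globular sets (with cells concentrated in dimensions `≤ n`). -/
structure GlobSet (n : ℕ) where
  cells : ℕ → Type
  src : ∀ k, cells (k + 1) → cells k
  tgt : ∀ k, cells (k + 1) → cells k
  glob_ss : ∀ k (x : cells (k + 2)), src k (src (k + 1) x) = src k (tgt (k + 1) x)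
  glob_tt : ∀ k (x : cells (k + 2)), tgt k (src (k + 1) x) = tgt k (tgt (k + 1) x)
  above : ∀ k, n < k → IsEmpty (cells k)

namespace GlobSet

/-- Morphisms of globular sets. -/
structure Hom {n : ℕ} (X Y : GlobSet n) where
  app : ∀ k, X.cells k → Y.cells k
  comm_src : ∀ k (x : X.cells (k + 1)), Y.src k (app (k + 1) x) = app k (X.src k x)
  comm_tgt : ∀ k (x : X.cells (k + 1)), Y.tgt k (app (k + 1) x) = app k (X.tgt k x)

theorem Hom.ext' {n : ℕ} {X Y : GlobSet n} {F G : Hom X Y}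
    (h : ∀ k, F.app k = G.app k) : F = G := by
  cases F; cases G
  have : _ = _ := funext h
  cases this; rfl

instance {n : ℕ} : Category (GlobSet n) where
  Hom := Hom
  id X := ⟨fun _ => id, fun _ _ => rfl, fun _ _ => rfl⟩
  comp F G := ⟨fun k => G.app k ∘ F.app k,
    fun k x => by simp [Function.comp_apply, G.comm_src, F.comm_src],
    fun k x => by simp [Function.comp_apply, G.comm_tgt, F.comm_tgt]⟩
  id_comp F := Hom.ext' (fun k => rfl)
  comp_id F := Hom.ext' (fun k => rfl)
  assoc F G H := Hom.ext' (fun k => rfl)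

@[simp] theorem comp_app {n : ℕ} {X Y Z : GlobSet n} (F : X ⟶ Y) (G : Y ⟶ Z) (k : ℕ) :
    (F ≫ G).app k = G.app k ∘ F.app k := rfl

@[simp] theorem id_app {n : ℕ} (X : GlobSet n) (k : ℕ) :
    (𝟙 X : X ⟶ X).app k = id := rfl

end GlobSet

/-- The globular set `Tr_{≤n} = T_{≤n}(1)` of trees, with sources and targets given
by truncation. -/
def treeGlob (n : ℕ) : GlobSet n where
  cells k := PLift (k ≤ n) × Tr k
  src k x := ⟨⟨Nat.le_of_succ_le x.1.down⟩, trunc x.2⟩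
  tgt k x := ⟨⟨Nat.le_of_succ_le x.1.down⟩, trunc x.2⟩
  glob_ss k x := Prod.ext (Subsingleton.elim _ _) rfl
  glob_tt k x := Prod.ext (Subsingleton.elim _ _) rfl
  above k h := ⟨fun x => absurd x.1.down (by omega)⟩

/-- The sub-globular set `LinTr_{≤n}` of linear trees. -/
def linGlob (n : ℕ) : GlobSet n where
  cells k := PLift (k ≤ n) × { p : Tr k // linear p }
  src k x := ⟨⟨Nat.le_of_succ_le x.1.down⟩, ⟨trunc x.2.1, linear_trunc _ x.2.2⟩⟩
  tgt k x := ⟨⟨Nat.le_of_succ_le x.1.down⟩, ⟨trunc x.2.1, linear_trunc _ x.2.2⟩⟩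
  glob_ss k x := Prod.ext (Subsingleton.elim _ _) rfl
  glob_tt k x := Prod.ext (Subsingleton.elim _ _) rfl
  above k h := ⟨fun x => absurd x.1.down (by omega)⟩

/-- The inclusion of the linear trees into all trees. -/
def linIncl (n : ℕ) : linGlob n ⟶ treeGlob n where
  app k x := ⟨x.1, x.2.1⟩
  comm_src k x := rfl
  comm_tgt k x := rfl

/-- Reflexive `n`-globular sets: globular sets with chosen common sections of the
source and target maps. -/
structure ReflGlob (n : ℕ) where
  G : GlobSet n
  z : ∀ k, k < n → G.cells k → G.cells (k + 1)
  z_src : ∀ k (h : k < n) (x : G.cells k), G.src k (z k h x) = x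
  z_tgt : ∀ k (h : k < n) (x : G.cells k), G.tgt k (z k h x) = x

/-- Morphisms of reflexive globular sets. -/
structure ReflHom {n : ℕ} (X Y : ReflGlob n) where
  F : X.G ⟶ Y.G
  comm_z : ∀ k (h : k < n) (x : X.G.cells k),
    Y.z k h (F.app k x) = F.app (k + 1) (X.z k h x)

theorem ReflHom.ext' {n : ℕ} {X Y : ReflGlob n} {F G : ReflHom X Y}
    (h : F.F = G.F) : F = G := by
  cases F; cases G; cases h; rfl

instance {n : ℕ} : Category (ReflGlob n) where
  Hom := ReflHom
  id X := ⟨𝟙 X.G, fun _ _ _ => rfl⟩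
  comp F G := ⟨F.F ≫ G.F, fun k h x => by
    simp only [GlobSet.comp_app, Function.comp_apply, G.comm_z, F.comm_z]⟩
  id_comp F := ReflHom.ext' (Category.id_comp _)
  comp_id F := ReflHom.ext' (Category.comp_id _)
  assoc F G H := ReflHom.ext' (Category.assoc _ _ _)

/-- `T_{≤n}`-collections over `Set`, described concretely: a family of sets of
operations indexed by trees of each stage `≤ n`, with source and target maps over
truncation.  (The underlying collections of `T_{≤n}`-operads over `Set`.) -/
structure Coll (n : ℕ) where
  fib : ∀ k : ℕ, k ≤ n → Tr k → Type
  s : ∀ (k : ℕ) (h : k + 1 ≤ n) (p : Tr (k + 1)),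
    fib (k + 1) h p → fib k (Nat.le_of_succ_le h) (trunc p)
  t : ∀ (k : ℕ) (h : k + 1 ≤ n) (p : Tr (k + 1)),
    fib (k + 1) h p → fib k (Nat.le_of_succ_le h) (trunc p)
  glob_ss : ∀ (k : ℕ) (h : k + 2 ≤ n) (p : Tr (k + 2)) (x : fib (k + 2) h p),
    s k _ _ (s (k + 1) h p x) = s k _ _ (t (k + 1) h p x)
  glob_tt : ∀ (k : ℕ) (h : k + 2 ≤ n) (p : Tr (k + 2)) (x : fib (k + 2) h p),
    t k _ _ (s (k + 1) h p x) = t k _ _ (t (k + 1) h p x)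

namespace Coll

variable {n : ℕ}

/-- Morphisms of collections. -/
structure Hom (A B : Coll n) where
  app : ∀ (k : ℕ) (h : k ≤ n) (p : Tr k), A.fib k h p → B.fib k h p
  comm_s : ∀ (k : ℕ) (h : k + 1 ≤ n) (p : Tr (k + 1)) (x : A.fib (k + 1) h p),
    B.s k h p (app (k + 1) h p x) = app k _ (trunc p) (A.s k h p x)
  comm_t : ∀ (k : ℕ) (h : k + 1 ≤ n) (p : Tr (k + 1)) (x : A.fib (k + 1) h p),
    B.t k h p (app (k + 1) h p x) = app k _ (trunc p) (A.t k h p x)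

theorem Hom.ext' {A B : Coll n} {F G : Hom A B} (h : ∀ k hk p, F.app k hk p = G.app k hk p) :
    F = G := by
  cases F; cases G
  have : _ = _ := funext fun k => funext fun hk => funext fun p => h k hk p
  cases this; rfl

instance : Category (Coll n) where
  Hom := Hom
  id A := ⟨fun _ _ _ => id, fun _ _ _ _ => rfl, fun _ _ _ _ => rfl⟩
  comp F G := ⟨fun k h p => G.app k h p ∘ F.app k h p,
    fun k h p x => by simp [Function.comp_apply, G.comm_s, F.comm_s],
    fun k h p x => by simp [Function.comp_apply, G.comm_t, F.comm_t]⟩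
  id_comp F := Hom.ext' (fun _ _ _ => rfl)
  comp_id F := Hom.ext' (fun _ _ _ => rfl)
  assoc F G H := Hom.ext' (fun _ _ _ => rfl)

end Coll

/-- The subterminal collection `RGr_{≤n}` of linear trees. -/
def RGrColl (n : ℕ) : Coll n where
  fib _k _ p := PLift (linear p)
  s _ _ _ x := ⟨linear_trunc _ x.down⟩
  t _ _ _ x := ⟨linear_trunc _ x.down⟩
  glob_ss _ _ _ _ := Subsingleton.elim _ _
  glob_tt _ _ _ _ := Subsingleton.elim _ _

/-- Binary product of collections, formed fibrewise. -/
def prodColl {n : ℕ} (A B : Coll n) : Coll n where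
  fib k h p := A.fib k h p × B.fib k h p
  s k h p x := (A.s k h p x.1, B.s k h p x.2)
  t k h p x := (A.t k h p x.1, B.t k h p x.2)
  glob_ss k h p x := Prod.ext (A.glob_ss k h p x.1) (B.glob_ss k h p x.2)
  glob_tt k h p x := Prod.ext (A.glob_tt k h p x.1) (B.glob_tt k h p x.2)

/-- The projection `p_A : A × RGr_{≤n} ⟶ RGr_{≤n}`, sending each operation of linear
arity to its arity. -/
def projRGr {n : ℕ} (A : Coll n) : prodColl A (RGrColl n) ⟶ RGrColl n where
  app _ _ _ x := x.2
  comm_s _ _ _ _ := rfl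
  comm_t _ _ _ _ := rfl

/-- A collection (and in particular a `T_{≤n}`-operad) is reduced when it has exactly
one operation of each linear arity. -/
def Reduced {n : ℕ} (A : Coll n) : Prop :=
  ∀ (k : ℕ) (h : k ≤ n) (p : Tr k), linear p →
    Nonempty (A.fib k h p) ∧ Subsingleton (A.fib k h p)

/-- The product of a morphism with the identity of `RGr`. -/
def prodHom {n : ℕ} {A B : Coll n} (f : A ⟶ B) :
    prodColl A (RGrColl n) ⟶ prodColl B (RGrColl n) where
  app k h p x := (f.app k h p x.1, x.2)
  comm_s k h p x := Prod.ext (f.comm_s k h p x.1) rfl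
  comm_t k h p x := Prod.ext (f.comm_t k h p x.1) rfl

/-- The functor `Δ_{RGr} : Coll ⥤ Coll/RGr` (pullback along `RGr ↪ T_{≤n}`,
described fibrewise). -/
def deltaRGr (n : ℕ) : Coll n ⥤ Over (RGrColl n) where
  obj A := Over.mk (projRGr A)
  map {A B} f := Over.homMk (prodHom f) (Coll.Hom.ext' (fun _ _ _ => rfl))
  map_id A := by
    apply Over.OverMorphism.ext
    exact Coll.Hom.ext' (fun _ _ _ => rfl)
  map_comp f g := by
    apply Over.OverMorphism.ext
    exact Coll.Hom.ext' (fun _ _ _ => rfl)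

/-- The pseudo-fibre of `Δ_{RGr}` over the point `1_{RGr}`: objects are collections
`A` equipped with an isomorphism `Δ(A) ≅ 1_{RGr}` in `Coll/RGr`. -/
structure PsFib (n : ℕ) where
  A : Coll n
  e : (deltaRGr n).obj A ≅ Over.mk (𝟙 (RGrColl n))

/-- Morphisms in the pseudo-fibre. -/
structure PsFibHom {n : ℕ} (x y : PsFib n) where
  f : x.A ⟶ y.A
  comm : (deltaRGr n).map f ≫ y.e.hom = x.e.hom

theorem PsFibHom.ext' {n : ℕ} {x y : PsFib n} {F G : PsFibHom x y} (h : F.f = G.f) :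
    F = G := by
  cases F; cases G; cases h; rfl

instance {n : ℕ} : Category (PsFib n) where
  Hom := PsFibHom
  id x := ⟨𝟙 _, by simp⟩
  comp F G := ⟨F.f ≫ G.f, by rw [Functor.map_comp, Category.assoc, G.comm, F.comm]⟩
  id_comp F := PsFibHom.ext' (Category.id_comp _)
  comp_id F := PsFibHom.ext' (Category.comp_id _)
  assoc F G H := PsFibHom.ext' (Category.assoc _ _ _)

section Aux

variable {n : ℕ}

/-- Inverse of `projRGr A` when `A` is reduced. -/
noncomputable def projInv {A : Coll n} (hA : Reduced A) : RGrColl n ⟶ prodColl A (RGrColl n) where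
  app k h p x := (Classical.choice (hA k h p x.down).1, x)
  comm_s k h p x := Prod.ext
    (@Subsingleton.elim _ (hA k _ (trunc p) (linear_trunc p x.down)).2 _ _) rfl
  comm_t k h p x := Prod.ext
    (@Subsingleton.elim _ (hA k _ (trunc p) (linear_trunc p x.down)).2 _ _) rfl

theorem reduced_of_isIso {A : Coll n} (h : IsIso (projRGr A)) : Reduced A := by
  intro k hk p hp
  set g := inv (projRGr A) with hg
  have hid : projRGr A ≫ g = 𝟙 _ := IsIso.hom_inv_id _
  have key : ∀ x : A.fib k hk p × PLift (linear p),
      g.app k hk p x.2 = x := by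
    intro x
    have := congrArg (fun (F : prodColl A (RGrColl n) ⟶ prodColl A (RGrColl n)) =>
      F.app k hk p x) hid
    exact this
  constructor
  · exact ⟨(g.app k hk p ⟨hp⟩).1⟩
  · constructor
    intro a b
    have ha := key (a, ⟨hp⟩)
    have hb := key (b, ⟨hp⟩)
    have : (a, (⟨hp⟩ : PLift (linear p))) = (b, ⟨hp⟩) := by rw [← ha, ← hb]
    exact congrArg Prod.fst this

theorem isIso_of_reduced {A : Coll n} (hA : Reduced A) : IsIso (projRGr A) := by
  refine ⟨projInv hA, ?_, ?_⟩
  · refine Coll.Hom.ext' fun k hk p => funext fun x => ?_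
    exact Prod.ext (@Subsingleton.elim _ (hA k hk p x.2.down).2 _ _) rfl
  · exact Coll.Hom.ext' fun k hk p => rfl

theorem proj_eq_of_psfib (x : PsFib n) : x.e.hom.left = projRGr x.A := by
  have := Over.w x.e.hom
  simp at this; exact this

theorem psfib_reduced (x : PsFib n) : Reduced x.A := by
  apply reduced_of_isIso
  have : IsIso x.e.hom.left := by
    refine ⟨x.e.inv.left, ?_, ?_⟩
    · have := congrArg CommaMorphism.left x.e.hom_inv_id
      simpa using this
    · have := congrArg CommaMorphism.left x.e.inv_hom_id
      simpa using this
  rw [← proj_eq_of_psfib x]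
  exact this

/-- The canonical iso in `Over (RGrColl n)` for a reduced collection. -/
noncomputable def canonIso {A : Coll n} (hA : Reduced A) :
    (deltaRGr n).obj A ≅ Over.mk (𝟙 (RGrColl n)) :=
  @Over.isoMk _ _ _ _ _ (@asIso _ _ _ _ (projRGr A) (isIso_of_reduced hA))
    (Category.comp_id _)

theorem over_hom_ext {A : Coll n} {X : Over (RGrColl n)}
    {f g : (deltaRGr n).obj A ⟶ X} (h : f.left = g.left) : f = g :=
  Over.OverMorphism.ext h

theorem psfib_e_eq (x : PsFib n) : x.e = canonIso (psfib_reduced x) := by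
  apply Iso.ext
  apply Over.OverMorphism.ext
  rw [proj_eq_of_psfib x]
  rfl

end Aux

/-- A `T_{≤n}`-operad `A` is reduced (each `A_p` for linear `p` is
a singleton) if and only if the projection `p_A : A × RGr_{≤n} ⟶ RGr_{≤n}` is an
isomorphism; consequently the category of reduced operads is a bipullback of
`Δ_{RGr} : Op ⥤ Op/RGr` against the point `1_{RGr}`, i.e. the full subcategory of
reduced objects is equivalent to the pseudo-fibre of `Δ_{RGr}` over `1_{RGr}`.
(Both conditions are conditions on, and are detected by, underlying collections,
which is how they are stated here.) -/
theorem reduced_iff_proj_iso (n : ℕ) :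
    (∀ A : Coll n, Reduced A ↔ IsIso (projRGr A)) ∧
      Nonempty (ObjectProperty.FullSubcategory (Reduced (n := n)) ≌ PsFib n) := by
  constructor
  · intro A
    exact ⟨isIso_of_reduced, reduced_of_isIso⟩
  · classical
    refine ⟨CategoryTheory.Equivalence.mk ?F ?G ?unit ?counit⟩
    case F =>
      exact
      { obj := fun A => ⟨A.obj, canonIso A.property⟩
        map := fun {A B} f => ⟨f.hom, by
          apply Over.OverMorphism.ext
          show prodHom f.hom ≫ projRGr B.obj = projRGr A.obj
          exact Coll.Hom.ext' fun _ _ _ => rfl⟩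
        map_id := fun A => PsFibHom.ext' rfl
        map_comp := fun f g => PsFibHom.ext' rfl }
    case G =>
      exact
      { obj := fun x => ⟨x.A, psfib_reduced x⟩
        map := fun {x y} F => ⟨F.f⟩
        map_id := fun x => rfl
        map_comp := fun f g => rfl }
    case unit =>
      exact NatIso.ofComponents (fun A => Iso.refl _) (fun f => by
        simp; rfl)
    case counit =>
      refine NatIso.ofComponents (fun x => ?_) (fun f => ?_)
      · refine ⟨⟨𝟙 x.A, ?_⟩, ⟨𝟙 x.A, ?_⟩, ?_, ?_⟩
        · show (deltaRGr n).map (𝟙 x.A) ≫ x.e.hom = (canonIso (psfib_reduced x)).hom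
          rw [psfib_e_eq x, (deltaRGr n).map_id, Category.id_comp]
        · show (deltaRGr n).map (𝟙 x.A) ≫ (canonIso (psfib_reduced x)).hom = x.e.hom
          rw [psfib_e_eq x, (deltaRGr n).map_id, Category.id_comp]
        · exact PsFibHom.ext' (Category.id_comp _)
        · exact PsFibHom.ext' (Category.id_comp _)
      · exact PsFibHom.ext' (by simp; rfl)
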